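/- Every n-dimensional nul-filiform Zinbiel algebra over the complex numbers is isomorphic (as an algebra) to the algebra NF_n. -/
import Mathlib


/-- A bilinear multiplication `mul` is a *Zinbiel* multiplication if it satisfies
`(x∘y)∘z = x∘(y∘z) + x∘(z∘y)`. -/
def IsZinbiel {K A : Type*} [CommRing K] [AddCommGroup A] [Module K A]
    (mul : A →ₗ[K] A →ₗ[K] A) : Prop :=
  ∀ x y z : A, mul (mul x y) z = mul x (mul y z) + mul x (mul z y)

/-- The descending series of a (Zinbiel) algebra: `zpow mul i` is `A^i`,
with `A^1 = A` and `A^{k+1} = A ∘ A^k` (we also set `A^0 = A` for convenience). -/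
def zpow {K A : Type*} [CommRing K] [AddCommGroup A] [Module K A]
    (mul : A →ₗ[K] A →ₗ[K] A) : ℕ → Submodule K A
  | 0 => ⊤
  | 1 => ⊤
  | (k+2) => Submodule.span K {z | ∃ a : A, ∃ b ∈ zpow mul (k+1), z = mul a b}

namespace NulFilAux
variable {K A : Type*} [CommRing K] [AddCommGroup A] [Module K A]
    (mul : A →ₗ[K] A →ₗ[K] A)

lemma zpow_two_eq (k : ℕ) : zpow mul (k+2) =
    Submodule.span K {z | ∃ a : A, ∃ b ∈ zpow mul (k+1), z = mul a b} := by
  rw [zpow]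

lemma mul_mem_zpow_succ {j : ℕ} {x y : A} (hy : y ∈ zpow mul j) :
    mul x y ∈ zpow mul (j+1) := by
  cases j with
  | zero => exact Submodule.mem_top
  | succ m => exact Submodule.subset_span ⟨x, y, hy, rfl⟩

lemma zpow_succ_le : ∀ k, zpow mul (k+1) ≤ zpow mul k := by
  intro k
  induction k with
  | zero => exact le_top
  | succ k ih =>
    cases k with
    | zero => exact le_top
    | succ m =>
      rw [zpow_two_eq, Submodule.span_le]
      rintro z ⟨a, b, hb, rfl⟩
      exact mul_mem_zpow_succ mul (ih hb)

lemma zpow_antitone {i j : ℕ} (h : i ≤ j) : zpow mul j ≤ zpow mul i := by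
  induction j with
  | zero => simp_all
  | succ k ih =>
    rcases Nat.lt_or_ge i (k+1) with h' | h'
    · exact le_trans (zpow_succ_le mul k) (ih (by omega))
    · have : i = k + 1 := by omega
      simp [this]

lemma mul_mem_zpow
    (hzin : ∀ x y z : A, mul (mul x y) z = mul x (mul y z) + mul x (mul z y)) :
    ∀ N i j, i + j ≤ N → ∀ x y : A, x ∈ zpow mul i → y ∈ zpow mul j →
      mul x y ∈ zpow mul (i + j) := by
  intro N
  induction N with
  | zero =>
    intro i j hij x y hx hy
    have hi : i = 0 := by omega
    have hj : j = 0 := by omega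
    subst hi; subst hj
    exact Submodule.mem_top
  | succ N ih =>
    intro i j hij x y hx hy
    match i with
    | 0 =>
      rw [Nat.zero_add]
      exact zpow_succ_le mul j (mul_mem_zpow_succ mul hy)
    | 1 =>
      rw [Nat.add_comm]
      exact mul_mem_zpow_succ mul hy
    | (m+2) =>
      rw [zpow_two_eq] at hx
      induction hx using Submodule.span_induction with
      | mem z hz =>
        obtain ⟨a, b, hb, rfl⟩ := hz
        rw [hzin a b y]
        have h1 : mul b y ∈ zpow mul ((m+1) + j) :=
          ih (m+1) j (by omega) b y hb hy
        have h2 : mul y b ∈ zpow mul (j + (m+1)) :=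
          ih j (m+1) (by omega) y b hy hb
        have h1' : mul a (mul b y) ∈ zpow mul ((m+1) + j + 1) :=
          mul_mem_zpow_succ mul h1
        have h2' : mul a (mul y b) ∈ zpow mul (j + (m+1) + 1) :=
          mul_mem_zpow_succ mul h2
        have e1 : (m+1) + j + 1 = m + 2 + j := by omega
        have e2 : j + (m+1) + 1 = m + 2 + j := by omega
        rw [e1] at h1'; rw [e2] at h2'
        exact add_mem h1' h2'
      | zero => simp
      | add u v _ _ hu hv =>
        rw [map_add, LinearMap.add_apply]
        exact add_mem hu hv
      | smul c u _ hu =>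
        rw [map_smul, LinearMap.smul_apply]
        exact Submodule.smul_mem _ c hu

end NulFilAux

namespace NulFilAux
variable {K A : Type*} [CommRing K] [AddCommGroup A] [Module K A]

def eseq (mul : A →ₗ[K] A →ₗ[K] A) (v : A) : ℕ → A
  | 0 => 0
  | 1 => v
  | (k+2) => mul v (eseq mul v (k+1))

variable (mul : A →ₗ[K] A →ₗ[K] A) (v : A)

lemma eseq_one : eseq mul v 1 = v := rfl

lemma eseq_succ {k : ℕ} (hk : 1 ≤ k) : eseq mul v (k+1) = mul v (eseq mul v k) := by
  match k, hk with
  | (m+1), _ => rfl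

lemma eseq_mem : ∀ k, 1 ≤ k → eseq mul v k ∈ zpow mul k := by
  intro k hk
  induction k with
  | zero => omega
  | succ m ih =>
    rcases Nat.eq_zero_or_pos m with hm | hm
    · subst hm; exact Submodule.mem_top
    · rw [eseq_succ mul v hm]
      exact mul_mem_zpow_succ mul (ih hm)

end NulFilAux

namespace NulFilAux
variable {K A : Type*} [Field K] [CharZero K] [AddCommGroup A] [Module K A]
variable (mul : A →ₗ[K] A →ₗ[K] A) (v : A)
variable (hzin : ∀ x y z : A, mul (mul x y) z = mul x (mul y z) + mul x (mul z y))

include hzin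

omit [CharZero K] in
lemma table_one : ∀ i, 1 ≤ i → mul (eseq mul v i) v = (i : K) • eseq mul v (i+1) := by
  intro i hi
  induction i with
  | zero => omega
  | succ m ih =>
    rcases Nat.eq_zero_or_pos m with hm | hm
    · subst hm
      rw [show (0:ℕ)+1+1 = 1+1 from rfl, eseq_succ mul v le_rfl, eseq_one]
      simp
    · rw [eseq_succ mul v hm, hzin v (eseq mul v m) v, ih hm, map_smul,
        ← eseq_succ mul v hm, ← eseq_succ mul v (by omega : 1 ≤ m + 1)]
      push_cast
      rw [add_smul, one_smul]

lemma table : ∀ j, 1 ≤ j → ∀ i, 1 ≤ i →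
    mul (eseq mul v i) (eseq mul v j)
      = (((i + j - 1).choose j : ℕ) : K) • eseq mul v (i + j) := by
  intro j hj
  induction j, hj using Nat.le_induction with
  | base =>
    intro i hi
    rw [eseq_one, table_one mul v hzin i hi, Nat.choose_one_right,
      show i + 1 - 1 = i from by omega]
  | succ j hj ih =>
    intro i hi
    have h1 : eseq mul v (j+1) = mul v (eseq mul v j) := eseq_succ mul v hj
    have hz := hzin (eseq mul v i) v (eseq mul v j)
    rw [table_one mul v hzin i hi, table_one mul v hzin j hj, ← h1] at hz
    rw [LinearMap.map_smul₂, map_smul, ih (i+1) (by omega)] at hz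
    rw [show i + 1 + j - 1 = i + j from by omega,
      show i + 1 + j = i + (j + 1) from by omega] at hz
    set X := mul (eseq mul v i) (eseq mul v (j+1)) with hX
    set e := eseq mul v (i + (j+1)) with he
    have key : ((j:K) + 1) • X = ((i:K) * (((i+j).choose j : ℕ) : K)) • e := by
      rw [add_smul, one_smul, mul_smul]
      linear_combination (norm := module) -hz
    have hne : ((j:K) + 1) ≠ 0 := by
      have : ((j+1 : ℕ) : K) ≠ 0 := Nat.cast_ne_zero.mpr (by omega)
      push_cast at this
      exact this
    have hchoose : (j + 1) * ((i + j).choose (j+1)) = i * ((i + j).choose j) := by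
      rw [mul_comm, Nat.choose_succ_right_eq, Nat.add_sub_cancel, mul_comm]
    refine smul_right_injective A hne ?_
    show ((j:K) + 1) • X = ((j:K) + 1) • _
    rw [key, smul_smul, show i + (j+1) - 1 = i + j from by omega]
    congr 1
    have hc : (((j + 1) * ((i + j).choose (j+1)) : ℕ) : K)
        = ((i * ((i + j).choose j) : ℕ) : K) := by rw [hchoose]
    push_cast at hc ⊢
    linear_combination -hc

end NulFilAux

namespace NulFilAux
variable {K A : Type*} [CommRing K] [AddCommGroup A] [Module K A]
    (mul : A →ₗ[K] A →ₗ[K] A)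

lemma zpow_one_eq : zpow mul 1 = ⊤ := by rw [zpow]

end NulFilAux


/-- The bilinear multiplication on `Fin n → ℂ` determined by structure constants `c`:
`e_i ∘ e_j = ∑ k, c i j k • e_k`. -/
noncomputable def mulOf (n : ℕ) (c : Fin n → Fin n → Fin n → ℂ) :
    (Fin n → ℂ) →ₗ[ℂ] (Fin n → ℂ) →ₗ[ℂ] (Fin n → ℂ) :=
  LinearMap.mk₂ ℂ (fun x y k => ∑ i, ∑ j, x i * y j * c i j k)
    (fun x x' y => by
      funext k
      simp [add_mul, Finset.sum_add_distrib])
    (fun a x y => by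
      funext k
      simp [Finset.mul_sum, mul_assoc])
    (fun x y y' => by
      funext k
      simp [mul_add, add_mul, Finset.sum_add_distrib])
    (fun a x y => by
      funext k
      simp [Finset.mul_sum, mul_assoc, mul_left_comm])

lemma mulOf_single (n : ℕ) (c : Fin n → Fin n → Fin n → ℂ) (i j : Fin n) :
    mulOf n c (Pi.single i 1) (Pi.single j 1) = fun k => c i j k := by
  have h : ∀ x y : Fin n → ℂ, mulOf n c x y = fun k => ∑ i', ∑ j', x i' * y j' * c i' j' k :=
    fun x y => LinearMap.mk₂_apply (R := ℂ) _ _ _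
  rw [h]
  funext k
  rw [Finset.sum_eq_single i, Finset.sum_eq_single j]
  · simp
  · intro b _ hb; simp [Pi.single_apply, hb]
  · simp
  · intro b _ hb
    simp [Pi.single_apply, hb]
  · simp

/-- Two bilinear multiplications give isomorphic algebras if there is a linear
equivalence intertwining them. -/
def Isom {A B : Type*} [AddCommGroup A] [Module ℂ A] [AddCommGroup B] [Module ℂ B]
    (mulA : A →ₗ[ℂ] A →ₗ[ℂ] A) (mulB : B →ₗ[ℂ] B →ₗ[ℂ] B) : Prop :=
  ∃ f : A ≃ₗ[ℂ] B, ∀ x y : A, f (mulA x y) = mulB (f x) (f y)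

/-- Structure constants of the nul-filiform algebra `NF_n`:
`e_i ∘ e_j = C(i+j-1, j) e_{i+j}` for `2 ≤ i+j ≤ n` (1-indexed). -/
noncomputable def NFc (n : ℕ) : Fin n → Fin n → Fin n → ℂ := fun i j k =>
  if (i : ℕ) + j + 1 = (k : ℕ) then (((i : ℕ) + j + 1).choose ((j : ℕ) + 1) : ℂ) else 0

/-- The nul-filiform Zinbiel algebra `NF_n` (as a multiplication on `Fin n → ℂ`). -/
noncomputable def NFmul (n : ℕ) : (Fin n → ℂ) →ₗ[ℂ] (Fin n → ℂ) →ₗ[ℂ] (Fin n → ℂ) :=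
  mulOf n (NFc n)

open NulFilAux Module in
/-- Every `n`-dimensional nul-filiform complex Zinbiel algebra is
isomorphic to `NF_n`. -/
theorem nulfiliform_iso_NF (n : ℕ) (A : Type*) [AddCommGroup A] [Module ℂ A]
    [FiniteDimensional ℂ A]
    (mul : A →ₗ[ℂ] A →ₗ[ℂ] A) (hzin : IsZinbiel mul)
    (hdim : Module.finrank ℂ A = n)
    (hnulfil : ∀ i : ℕ, 1 ≤ i → i ≤ n + 1 →
      Module.finrank ℂ (zpow mul i) = (n + 1) - i) :
    Isom mul (NFmul n) := by
  have hzin' : ∀ x y z : A, mul (mul x y) z = mul x (mul y z) + mul x (mul z y) := hzin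
  rcases Nat.eq_zero_or_pos n with hn | hn
  · -- trivial case
    subst hn
    haveI : Subsingleton A := by
      rw [← Module.finrank_zero_iff (R := ℂ)]
      exact hdim
    have hfr : Module.finrank ℂ A = Module.finrank ℂ (Fin 0 → ℂ) := by simp [hdim]
    obtain ⟨f⟩ := FiniteDimensional.nonempty_linearEquiv_of_finrank_eq hfr
    exact ⟨f, fun x y => Subsingleton.elim _ _⟩
  -- main case : n ≥ 1
  -- choose v ∉ A²
  have h2fr : finrank ℂ (zpow mul 2) = n - 1 := by
    have := hnulfil 2 (by omega) (by omega)
    omega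
  obtain ⟨v, hv⟩ : ∃ v, v ∉ zpow mul 2 := by
    by_contra h
    push_neg at h
    have htop : zpow mul 2 = ⊤ := eq_top_iff.mpr fun x _ => h x
    rw [htop, finrank_top, hdim] at h2fr
    omega
  set e : ℕ → A := eseq mul v with he
  -- A^{n+1} = ⊥ and vanishing of high e's
  have hbot : zpow mul (n+1) = ⊥ := by
    have h0 : finrank ℂ (zpow mul (n+1)) = 0 := by
      have := hnulfil (n+1) (by omega) le_rfl
      omega
    exact Submodule.finrank_eq_zero.mp h0
  have ezero : ∀ m, n + 1 ≤ m → e m = 0 := by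
    intro m hm
    have h1 : e m ∈ zpow mul m := eseq_mem mul v m (by omega)
    have h2 : e m ∈ zpow mul (n+1) := zpow_antitone mul hm h1
    rw [hbot] at h2
    simpa using h2
  -- ⊤ = ℂv ⊔ A²
  have hspan1 : (⊤ : Submodule ℂ A) ≤ (ℂ ∙ v) ⊔ zpow mul 2 := by
    have hvmem : v ∈ (ℂ ∙ v) ⊔ zpow mul 2 :=
      Submodule.mem_sup_left (Submodule.mem_span_singleton_self v)
    have hlt : zpow mul 2 < (ℂ ∙ v) ⊔ zpow mul 2 :=
      lt_of_le_of_ne le_sup_right (fun h => hv (h ▸ hvmem))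
    have hfr := Submodule.finrank_lt_finrank_of_lt hlt
    have hle : finrank ℂ ((ℂ ∙ v) ⊔ zpow mul 2 : Submodule ℂ A) ≤ n :=
      hdim ▸ Submodule.finrank_le _
    have heq : finrank ℂ ((ℂ ∙ v) ⊔ zpow mul 2 : Submodule ℂ A) = finrank ℂ A := by omega
    exact (Submodule.eq_top_of_finrank_eq heq).symm.le
  -- A^k ≤ ℂ e_k ⊔ A^{k+1}
  have hstepk : ∀ k, 1 ≤ k → zpow mul k ≤ (ℂ ∙ e k) ⊔ zpow mul (k+1) := by
    intro k hk
    induction k, hk using Nat.le_induction with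
    | base =>
      rw [zpow_one_eq, he, eseq_one]
      exact hspan1
    | succ k hk ih =>
      have hzp : zpow mul (k+1)
          = Submodule.span ℂ {z | ∃ a : A, ∃ b ∈ zpow mul k, z = mul a b} := by
        obtain ⟨m, rfl⟩ : ∃ m, k = m + 1 := ⟨k - 1, by omega⟩
        exact zpow_two_eq mul m
      rw [hzp, Submodule.span_le]
      rintro z ⟨a, b, hb, rfl⟩
      have ha : a ∈ (ℂ ∙ v) ⊔ zpow mul 2 := hspan1 Submodule.mem_top
      obtain ⟨a1, ha1, a2, ha2, rfl⟩ := Submodule.mem_sup.mp ha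
      obtain ⟨c, rfl⟩ := Submodule.mem_span_singleton.mp ha1
      obtain ⟨b1, hb1, b2, hb2, rfl⟩ := Submodule.mem_sup.mp (ih hb)
      obtain ⟨d, rfl⟩ := Submodule.mem_span_singleton.mp hb1
      have hve : mul v (e k) = e (k+1) := (eseq_succ mul v hk).symm
      have hexp : mul (c • v + a2) (d • e k + b2)
          = (c * d) • mul v (e k)
            + (c • mul v b2 + (d • mul a2 (e k) + mul a2 b2)) := by
        simp only [map_add, map_smul, LinearMap.add_apply, LinearMap.smul_apply, smul_smul]
        module
      rw [SetLike.mem_coe, hexp]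
      refine add_mem ?_ (Submodule.mem_sup_right (add_mem ?_ (add_mem ?_ ?_)))
      · rw [hve]
        exact Submodule.mem_sup_left
          (Submodule.smul_mem _ _ (Submodule.mem_span_singleton_self _))
      · exact Submodule.smul_mem _ _ (mul_mem_zpow_succ mul hb2)
      · refine Submodule.smul_mem _ _ ?_
        have := mul_mem_zpow mul hzin' (2 + k) 2 k le_rfl a2 _ ha2
          (eseq_mem mul v k (by omega))
        rwa [show (2 : ℕ) + k = k + 2 from by omega] at this
      · have := mul_mem_zpow mul hzin' (2 + k) 2 k le_rfl a2 _ ha2 (zpow_succ_le mul k hb2)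
        rwa [show (2 : ℕ) + k = k + 2 from by omega] at this
  -- spanning
  have hspan_range : (⊤ : Submodule ℂ A) ≤
      Submodule.span ℂ (Set.range fun i : Fin n => e ((i : ℕ) + 1)) := by
    have haux : ∀ m, m ≤ n → zpow mul (n + 1 - m) ≤
        Submodule.span ℂ (Set.range fun i : Fin n => e ((i : ℕ) + 1)) := by
      intro m hm
      induction m with
      | zero =>
        simp only [Nat.sub_zero, hbot]
        exact bot_le
      | succ m ih =>
        have h1 : (1 : ℕ) ≤ n - m := by omega
        have h2 : n + 1 - (m + 1) = n - m := by omega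
        rw [h2]
        refine le_trans (hstepk (n - m) h1) (sup_le ?_ ?_)
        · have : e (n - m) ∈ Set.range fun i : Fin n => e ((i : ℕ) + 1) :=
            ⟨⟨n - m - 1, by omega⟩, by simp; congr 1; omega⟩
          rw [Submodule.span_singleton_le_iff_mem]
          exact Submodule.subset_span this
        · have h3 : n - m + 1 = n + 1 - m := by omega
          rw [h3]
          exact ih (by omega)
    have := haux n le_rfl
    simpa [zpow_one_eq] using this
  -- the basis
  let bas : Basis (Fin n) ℂ A :=
    basisOfTopLeSpanOfCardEqFinrank (fun i : Fin n => e ((i : ℕ) + 1)) hspan_range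
      (by simp [hdim])
  have hbas : ∀ i : Fin n, bas i = e ((i : ℕ) + 1) := fun i => by
    rw [show bas i = _ from congrFun
      (coe_basisOfTopLeSpanOfCardEqFinrank (fun i : Fin n => e ((i : ℕ) + 1)) _ _) i]
  -- multiplication table
  have tbl : ∀ j, 1 ≤ j → ∀ i, 1 ≤ i →
      mul (e i) (e j) = (((i + j - 1).choose j : ℕ) : ℂ) • e (i + j) :=
    table mul v hzin'
  -- the isomorphism
  let f : A ≃ₗ[ℂ] (Fin n → ℂ) := bas.equiv (Pi.basisFun ℂ (Fin n)) (Equiv.refl _)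
  have hf : ∀ i : Fin n, f (bas i) = Pi.single i 1 := by
    intro i
    rw [show f (bas i) = Pi.basisFun ℂ (Fin n) (Equiv.refl _ i) from
      bas.equiv_apply i (Pi.basisFun ℂ (Fin n)) (Equiv.refl _)]
    simp [Pi.basisFun_apply]
  refine ⟨f, ?_⟩
  have main : mul.compr₂ (f : A →ₗ[ℂ] (Fin n → ℂ))
      = (NFmul n).compl₁₂ (f : A →ₗ[ℂ] (Fin n → ℂ)) (f : A →ₗ[ℂ] (Fin n → ℂ)) := by
    apply bas.ext
    intro i
    apply bas.ext
    intro j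
    show f (mul (bas i) (bas j)) = NFmul n (f (bas i)) (f (bas j))
    rw [hf, hf, hbas, hbas]
    rw [tbl ((j : ℕ) + 1) (by omega) ((i : ℕ) + 1) (by omega)]
    rw [show (i : ℕ) + 1 + ((j : ℕ) + 1) - 1 = (i : ℕ) + (j : ℕ) + 1 from by omega,
      show (i : ℕ) + 1 + ((j : ℕ) + 1) = (i : ℕ) + (j : ℕ) + 2 from by omega]
    rw [show NFmul n = mulOf n (NFc n) from rfl, mulOf_single, map_smul]
    by_cases hij : (i : ℕ) + (j : ℕ) + 2 ≤ n
    · have hlt : (i : ℕ) + (j : ℕ) + 1 < n := by omega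
      have hidx : ((i : ℕ) + (j : ℕ) + 2) = (((⟨(i : ℕ) + (j : ℕ) + 1, hlt⟩ : Fin n) : ℕ) + 1) := rfl
      rw [hidx, ← hbas, hf]
      funext k
      simp only [Pi.smul_apply, Pi.single_apply, NFc, smul_eq_mul]
      rcases eq_or_ne ((i : ℕ) + (j : ℕ) + 1) ((k : ℕ)) with h | h
      · have hk : k = (⟨(i : ℕ) + (j : ℕ) + 1, hlt⟩ : Fin n) := Fin.ext (by simp [← h])
        rw [if_pos hk, if_pos h, mul_one]
      · have hk : k ≠ (⟨(i : ℕ) + (j : ℕ) + 1, hlt⟩ : Fin n) := fun hk => h (by rw [hk])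
        rw [if_neg hk, if_neg h, mul_zero]
    · rw [ezero _ (by omega), map_zero, smul_zero]
      funext k
      simp only [Pi.zero_apply, NFc]
      have : (i : ℕ) + (j : ℕ) + 1 ≠ (k : ℕ) := by have := k.isLt; omega
      simp [this]
  intro x y
  exact LinearMap.congr_fun (LinearMap.congr_fun main x) y
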